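/- Let n ≥ 1 be a natural number, L > 0, S > 0, t > 0, P > 0, and 0 < p ≤ P. Let μ be the Gamma distribution with shape n and rate 1 on ℝ. Then μ{λ ∈ ℝ : L·log₂(1 + S·p·λ) < t} ≤ (1/(n−1)!)·(P/p)^n · ∫_0^{(2^{t/L} − 1)/(S·P)} τ^{n-1}·e^{-τ} dτ. -/

import Mathlib

open MeasureTheory ProbabilityTheory Real

open Set in
theorem outage_bound_chase_combining
    (n : ℕ) (hn : 1 ≤ n) (L S t P p : ℝ)
    (hL : 0 < L) (hS : 0 < S) (ht : 0 < t) (hP : 0 < P)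
    (hp : 0 < p) (hpP : p ≤ P)
    (μ : Measure ℝ) (hμ : μ = gammaMeasure (n : ℝ) 1) :
    μ {lam : ℝ | L * Real.logb 2 (1 + S * p * lam) < t}
      ≤ ENNReal.ofReal ((1 / (Nat.factorial (n - 1) : ℝ)) * (P / p) ^ n *
          ∫ τ in (0:ℝ)..(((2:ℝ) ^ (t / L) - 1) / (S * P)),
            τ ^ (n - 1 : ℝ) * Real.exp (-τ)) := by
  set c : ℝ := ((2:ℝ) ^ (t / L) - 1) / (S * p) with hc
  set d : ℝ := ((2:ℝ) ^ (t / L) - 1) / (S * P) with hdd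
  have h2 : (1:ℝ) < (2:ℝ) ^ (t / L) := by
    have := Real.one_lt_rpow_iff_of_pos (x := 2) (y := t / L) (by norm_num)
    exact this.mpr (Or.inl ⟨by norm_num, div_pos ht hL⟩)
  have hcpos : 0 < c := div_pos (by linarith) (by positivity)
  have hdpos : 0 < d := div_pos (by linarith) (by positivity)
  have hsub : {lam : ℝ | L * Real.logb 2 (1 + S * p * lam) < t} ⊆ Iio c := by
    intro x hx
    simp only [mem_setOf_eq] at hx
    by_cases hx0 : x < 0
    · exact lt_trans hx0 hcpos
    push_neg at hx0
    have hpos : (0:ℝ) < 1 + S * p * x := by positivity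
    have : Real.logb 2 (1 + S * p * x) < t / L := by
      rw [lt_div_iff₀ hL]; linarith [hx]
    have hlt : 1 + S * p * x < (2:ℝ) ^ (t / L) :=
      (Real.logb_lt_iff_lt_rpow (by norm_num) hpos).mp this
    have : S * p * x < (2:ℝ) ^ (t / L) - 1 := by linarith
    rw [mem_Iio, hc, lt_div_iff₀ (by positivity)]
    linarith [this]
  have hcast : ((n:ℝ) - 1) = ((n - 1 : ℕ) : ℝ) := by
    rw [Nat.cast_sub hn]; norm_num
  -- the two real integrands
  set g : ℝ → ℝ := fun x => x ^ (n - 1) * Real.exp (-x) with hg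
  set h : ℝ → ℝ := fun x => x ^ (n - 1) * Real.exp (-(p / P * x)) with hh
  have hgc : Continuous g := by continuity
  have hhc : Continuous h := by continuity
  have hfact : (Real.Gamma (n : ℝ)) = (Nat.factorial (n - 1) : ℝ) := by
    obtain ⟨m, rfl⟩ := Nat.exists_eq_add_of_le hn
    rw [add_comm]
    push_cast
    rw [Real.Gamma_nat_eq_factorial]
  -- μ (Iio c) = ofReal ∫ g / (n-1)!
  have hμIio : μ (Iio c) = ENNReal.ofReal ((1 / (Nat.factorial (n - 1) : ℝ)) *
      ∫ x in (0:ℝ)..c, g x) := by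
    rw [hμ, gammaMeasure, withDensity_apply _ measurableSet_Iio]
    have hsplit : Iio c = Iio (0:ℝ) ∪ Ico 0 c := by
      rw [Iio_union_Ico_eq_Iio hcpos.le]
    rw [hsplit, lintegral_union measurableSet_Ico ((Iio_disjoint_Ici le_rfl).mono_right Ico_subset_Ici_self)]
    have hzero : ∫⁻ x in Iio (0:ℝ), gammaPDF (n:ℝ) 1 x = 0 := by
      rw [setLIntegral_congr_fun measurableSet_Iio
        (fun x (hx : x < 0) ↦ gammaPDF_of_neg hx), lintegral_zero]
    rw [hzero, zero_add]
    have heq : ∀ x ∈ Ico (0:ℝ) c, gammaPDF (n:ℝ) 1 x =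
        ENNReal.ofReal ((1 / (Nat.factorial (n - 1) : ℝ)) * g x) := by
      intro x hx
      rw [gammaPDF_of_nonneg hx.1, hg]
      congr 1
      rw [Real.one_rpow, hfact, hcast, Real.rpow_natCast]
      ring_nf
    rw [setLIntegral_congr_fun measurableSet_Ico heq]
    rw [← ofReal_integral_eq_lintegral_ofReal]
    · rw [MeasureTheory.integral_const_mul]
      congr 1
      rw [MeasureTheory.integral_Ico_eq_integral_Ioo,
        intervalIntegral.integral_of_le hcpos.le, ← MeasureTheory.integral_Ioc_eq_integral_Ioo]
    · exact ((continuous_const.mul hgc).integrableOn_Icc.mono_set Ico_subset_Icc_self)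
    · refine (ae_restrict_iff' measurableSet_Ico).mpr (ae_of_all _ fun x hx => ?_)
      have hx0 : 0 ≤ x := hx.1
      have : 0 ≤ g x := by
        rw [hg]; positivity
      positivity
  -- substitution on the RHS integral
  have hd : (p / P) * c = d := by
    rw [hc, hdd]; field_simp
  have hpP0 : (p / P) ≠ 0 := by positivity
  have hsubst : (∫ τ in (0:ℝ)..d, τ ^ ((n:ℝ) - 1) * Real.exp (-τ))
      = (p / P) * ((p / P) ^ (n - 1) * ∫ x in (0:ℝ)..c, h x) := by
    simp_rw [hcast, Real.rpow_natCast]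
    have := intervalIntegral.integral_comp_mul_left (a := (0:ℝ)) (b := c)
      (fun τ => τ ^ (n - 1) * Real.exp (-τ)) hpP0
    simp only [mul_zero, hd, smul_eq_mul] at this
    have h2' : (∫ x in (0:ℝ)..d, x ^ (n-1) * Real.exp (-x))
        = (p/P) * ∫ x in (0:ℝ)..c, (p/P*x)^(n-1) * Real.exp (-(p/P*x)) := by
      rw [this, ← mul_assoc, mul_inv_cancel₀ hpP0, one_mul]
    rw [h2']
    congr 1
    rw [← intervalIntegral.integral_const_mul]
    apply intervalIntegral.integral_congr
    intro x hx
    rw [hh]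
    simp only [mul_pow]
    ring
  have hmono : (∫ x in (0:ℝ)..c, g x) ≤ ∫ x in (0:ℝ)..c, h x := by
    apply intervalIntegral.integral_mono_on hcpos.le
      (hgc.intervalIntegrable _ _) (hhc.intervalIntegrable _ _)
    intro x hx
    rw [hg, hh]
    have hx0 : 0 ≤ x := hx.1
    apply mul_le_mul_of_nonneg_left _ (by positivity)
    apply Real.exp_le_exp.mpr
    have : p / P * x ≤ x := by
      nlinarith [div_le_one_of_le₀ hpP hP.le]
    linarith
  have hpow : (P / p) ^ n * ((p / P) * (p / P) ^ (n - 1)) = 1 := by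
    have : (p / P) * (p / P) ^ (n - 1) = (p / P) ^ n := by
      rw [← pow_succ']
      congr 1
      omega
    rw [this, ← mul_pow, div_mul_div_comm, mul_comm P p, div_self (by positivity)]
    exact one_pow n
  calc μ {lam : ℝ | L * Real.logb 2 (1 + S * p * lam) < t}
      ≤ μ (Iio c) := measure_mono hsub
    _ = ENNReal.ofReal ((1 / (Nat.factorial (n - 1) : ℝ)) * ∫ x in (0:ℝ)..c, g x) := hμIio
    _ ≤ _ := by
        apply ENNReal.ofReal_le_ofReal
        rw [hsubst]
        have hf0 : (0:ℝ) < (Nat.factorial (n-1) : ℝ) := by positivity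
        calc (1 / (Nat.factorial (n - 1) : ℝ)) * ∫ x in (0:ℝ)..c, g x
            ≤ (1 / (Nat.factorial (n - 1) : ℝ)) * ∫ x in (0:ℝ)..c, h x :=
              mul_le_mul_of_nonneg_left hmono (by positivity)
          _ = (1 / (Nat.factorial (n - 1) : ℝ)) * (P / p) ^ n *
              ((p / P) * ((p / P) ^ (n - 1) * ∫ x in (0:ℝ)..c, h x)) := by
              have key : (P / p) ^ n * ((p / P) * ((p / P) ^ (n - 1) * ∫ x in (0:ℝ)..c, h x))
                  = ∫ x in (0:ℝ)..c, h x := by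
                rw [← mul_assoc ((p:ℝ)/P), ← mul_assoc, hpow, one_mul]
              rw [mul_assoc, key]
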